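/- Let N be a complete binary L-network with leaf set L0 ⊆ L = [n]. For a ∈ L, the vector δ_a (the (n+1)-vector indexed 0..n with a single 1 in coordinate a) occurs with multiplicity exactly 1 among all simple μ-vectors in the edge-based μ-representation μ(N) if and only if a is a leaf of N. -/

import Mathlib

open scoped Classical

noncomputable section

/-! ## Tags, μ-vectors, cherry types -/

inductive Tag : Type
  | te | hy | rn | ie
deriving DecidableEq, Inhabited

/-- The four cherry types (r2), (r3), (d), (u). -/
inductive CT : Type
  | r2 | r3 | d | u
deriving DecidableEq, Inhabited

/-- The eight cherry kinds: tree/reticulate combined with the four types. -/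
inductive CherryKind : Type
  | Tr2 | Tr3 | Td | Tu | Rr2 | Rr3 | Rd | Ru
deriving DecidableEq, Inhabited

def CherryKind.isTree : CherryKind → Bool
  | .Tr2 | .Tr3 | .Td | .Tu => true
  | _ => false

def CherryKind.ct : CherryKind → CT
  | .Tr2 => .r2 | .Tr3 => .r3 | .Td => .d | .Tu => .u
  | .Rr2 => .r2 | .Rr3 => .r3 | .Rd => .d | .Ru => .u

/-- A simple μ-vector on `n` taxa: coordinate 0 counts paths to hybrid nodes,
coordinate `i.succ` counts paths to the leaf labelled `i`. -/
abbrev MuVec (n : ℕ) := Fin (n + 1) → ℕ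

/-- A μ-entry: a multiset of (one or two) tagged simple μ-vectors. -/
abbrev MuEntry (n : ℕ) := Multiset (MuVec n × Tag)

/-- An edge-based μ-representation: a multiset of μ-entries. -/
abbrev MuRep (n : ℕ) := Multiset (MuEntry n)

/-- Indicator μ-vector `δ_S`. -/
def dlt {n : ℕ} (s : Finset (Fin (n + 1))) : MuVec n := fun i => if i ∈ s then 1 else 0

/-! ## Semidirected multigraphs with labelled leaves -/

/-- A semidirected multigraph on vertex names `ℕ` and edge names `ℕ`;
`dir e = true` means `e` is directed from `tail e` to `head e`;
`dir e = false` means `e` is an undirected edge with endpoints `tail e`, `head e`.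
Leaves may be labelled by taxa in `Fin n`. -/
structure Net (n : ℕ) where
  V : Finset ℕ
  E : Finset ℕ
  tail : ℕ → ℕ
  head : ℕ → ℕ
  dir : ℕ → Bool
  lbl : ℕ → Option (Fin n)

namespace Net

variable {n : ℕ}

def indeg (N : Net n) (v : ℕ) : ℕ :=
  (N.E.filter (fun e => N.dir e = true ∧ N.head e = v)).card
def outdeg (N : Net n) (v : ℕ) : ℕ :=
  (N.E.filter (fun e => N.dir e = true ∧ N.tail e = v)).card
def undeg (N : Net n) (v : ℕ) : ℕ :=
  (N.E.filter (fun e => N.dir e = false ∧ (N.tail e = v ∨ N.head e = v))).card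
def deg (N : Net n) (v : ℕ) : ℕ := N.indeg v + N.outdeg v + N.undeg v

def IsRootNode (N : Net n) (v : ℕ) : Prop := v ∈ N.V ∧ N.indeg v = 0 ∧ N.undeg v = 0
def IsLeafNode (N : Net n) (v : ℕ) : Prop := v ∈ N.V ∧ N.outdeg v = 0 ∧ N.undeg v = 0
def IsHybrid (N : Net n) (v : ℕ) : Prop := 2 ≤ N.indeg v
def IsTreeNode (N : Net n) (v : ℕ) : Prop := N.indeg v ≤ 1

/-- Source of a step `(e, forward?)` of a semidirected walk. -/
def src (N : Net n) (s : ℕ × Bool) : ℕ := if s.2 then N.tail s.1 else N.head s.1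
/-- Destination of a step. -/
def dst (N : Net n) (s : ℕ × Bool) : ℕ := if s.2 then N.head s.1 else N.tail s.1

/-- A step is legal from `u`: the edge is in the graph, directed edges are
traversed forwards, and the step starts at `u`. -/
def stepOK (N : Net n) (u : ℕ) (s : ℕ × Bool) : Prop :=
  s.1 ∈ N.E ∧ (N.dir s.1 = true → s.2 = true) ∧ N.src s = u

/-- `chain N u p x`: `p` is a semidirected walk from `u` to `x`. -/
def chain (N : Net n) : ℕ → List (ℕ × Bool) → ℕ → Prop
  | u, [], x => u = x
  | u, s :: p, x => N.stepOK u s ∧ N.chain (N.dst s) p x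

/-- A semidirected path (walk without repeated vertices) from `u` to `x`. -/
def IsPath (N : Net n) (u x : ℕ) (p : List (ℕ × Bool)) : Prop :=
  u ∈ N.V ∧ N.chain u p x ∧ (u :: p.map N.dst).Nodup

def paths (N : Net n) (u x : ℕ) : Set (List (ℕ × Bool)) := {p | N.IsPath u x p}
def pathsAvoid (N : Net n) (u x : ℕ) (e : ℕ) : Set (List (ℕ × Bool)) :=
  {p | N.IsPath u x p ∧ e ∉ p.map Prod.fst}

/-- `m N u x` : the number of semidirected paths from `u` to `x`. -/
def m (N : Net n) (u x : ℕ) : ℕ := (N.paths u x).ncard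
/-- `mAvoid N u x e` : the number of semidirected paths from `u` to `x` avoiding `e`. -/
def mAvoid (N : Net n) (u x : ℕ) (e : ℕ) : ℕ := (N.pathsAvoid u x e).ncard

/-- One undirected edge joins `u` and `v`. -/
def ustep (N : Net n) (u v : ℕ) : Prop :=
  ∃ e ∈ N.E, N.dir e = false ∧
    ((N.tail e = u ∧ N.head e = v) ∨ (N.tail e = v ∧ N.head e = u))

/-- `u ~ v`: joined by a path consisting solely of undirected edges. -/
def UndirConn (N : Net n) : ℕ → ℕ → Prop := Relation.ReflTransGen N.ustep

/-- A semidirected cycle. -/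
def IsSDCycle (N : Net n) (p : List (ℕ × Bool)) : Prop :=
  ∃ u, p ≠ [] ∧ N.chain u p u ∧ (p.map N.dst).Nodup ∧ (p.map Prod.fst).Nodup

def Acyclic (N : Net n) : Prop := ∀ p, ¬ N.IsSDCycle p

/-- `x` is the leaf labelled `a`. -/
def HasLeaf (N : Net n) (a : Fin n) (x : ℕ) : Prop := x ∈ N.V ∧ N.lbl x = some a

/-- `N` is an `L`-network: a semidirected acyclic graph whose leaves are tree
nodes, with leaves injectively labelled. -/
structure IsLNetwork (N : Net n) : Prop where
  wfT : ∀ e ∈ N.E, N.tail e ∈ N.V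
  wfH : ∀ e ∈ N.E, N.head e ∈ N.V
  acyclic : N.Acyclic
  leavesTree : ∀ v, N.IsLeafNode v → N.IsTreeNode v
  lblV : ∀ v, v ∉ N.V → N.lbl v = none
  lblLeaf : ∀ v ∈ N.V, ((N.lbl v).isSome ↔ N.IsLeafNode v)
  lblInj : ∀ v ∈ N.V, ∀ w ∈ N.V, N.lbl v ≠ none → N.lbl v = N.lbl w → v = w

/-- Binary: roots of degree 0, 2 or 3; leaves of degree 0 or 1; other nodes of degree 3. -/
def IsBinary (N : Net n) : Prop :=
  ∀ v ∈ N.V,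
    (N.IsRootNode v → N.deg v = 0 ∨ N.deg v = 2 ∨ N.deg v = 3) ∧
    (N.IsLeafNode v → N.deg v = 0 ∨ N.deg v = 1) ∧
    (¬ N.IsRootNode v → ¬ N.IsLeafNode v → N.deg v = 3)

/-- The class of `v` under `~` is a singleton. -/
def TrivialClass (N : Net n) (v : ℕ) : Prop := ∀ w, N.UndirConn v w → w = v

/-- Complete: edges incident to leaves are directed (toward the leaves), and every
nontrivial class under `~` has in-degree 0 in the contraction `N/~`. -/
def IsComplete (N : Net n) : Prop :=
  (∀ e ∈ N.E, N.dir e = false → ¬ N.IsLeafNode (N.tail e) ∧ ¬ N.IsLeafNode (N.head e)) ∧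
  (∀ v ∈ N.V, ¬ N.TrivialClass v → ∀ e ∈ N.E, N.dir e = true → ¬ N.UndirConn (N.head e) v)

/-- The class `[v]` is a root of the contraction `N/~`: no directed edge points into it. -/
def IsRootClass (N : Net n) (v : ℕ) : Prop :=
  v ∈ N.V ∧ ∀ e ∈ N.E, N.dir e = true → ¬ N.UndirConn (N.head e) v

/-- `v` belongs to an unresolved root component. -/
def UnresolvedRC (N : Net n) (v : ℕ) : Prop :=
  N.IsRootClass v ∧ (¬ N.TrivialClass v ∨ N.deg v = 3)

/-- `e` belongs to the admissible edge set of the root component of `v0`. -/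
def AdmFor (N : Net n) (v0 e : ℕ) : Prop := e ∈ N.E ∧ N.UndirConn (N.tail e) v0

/-! ## μ-representation of a network -/

def Hybs (N : Net n) : Finset ℕ := N.V.filter (fun v => N.IsHybrid v)

def mToLbl (N : Net n) (v : ℕ) (a : Fin n) : ℕ :=
  ∑ x ∈ N.V.filter (fun x => N.lbl x = some a), N.m v x
def mToLblAvoid (N : Net n) (v : ℕ) (a : Fin n) (e : ℕ) : ℕ :=
  ∑ x ∈ N.V.filter (fun x => N.lbl x = some a), N.mAvoid v x e

/-- Numbers of paths from `v` to hybrids (coordinate 0) and to each leaf. -/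
def muFrom (N : Net n) (v : ℕ) : MuVec n :=
  fun i => Fin.cases (∑ h ∈ N.Hybs, N.m v h) (fun a => N.mToLbl v a) i

/-- Numbers of paths from `v` avoiding edge `e`. -/
def muAt (N : Net n) (e : ℕ) (v : ℕ) : MuVec n :=
  fun i => Fin.cases (∑ h ∈ N.Hybs, N.mAvoid v h e) (fun a => N.mToLblAvoid v a e) i

/-- The μ-entry of an edge. -/
def muEntryEdge (N : Net n) (e : ℕ) : MuEntry n :=
  if N.dir e = true then
    let t : Tag := if N.IsHybrid (N.head e) then Tag.hy else Tag.te
    if N.UnresolvedRC (N.tail e) then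
      ({(N.muAt e (N.head e), t),
        (fun i => N.muFrom (N.tail e) i - N.muAt e (N.tail e) i, Tag.ie)} : MuEntry n)
    else ({(N.muAt e (N.head e), t)} : MuEntry n)
  else
    ({(N.muAt e (N.head e), Tag.te), (N.muAt e (N.tail e), Tag.te)} : MuEntry n)

/-- One μ-entry per root component (indexed by the minimal representative). -/
def rootEntries (N : Net n) : MuRep n :=
  ((N.V.filter (fun v => N.IsRootClass v ∧ ∀ w ∈ N.V, N.UndirConn v w → v ≤ w)).val).map
    (fun v => ({(N.muFrom v, Tag.rn)} : MuEntry n))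

/-- The edge-based μ-representation of `N`. -/
def muRep (N : Net n) : MuRep n :=
  N.E.val.map (fun e => N.muEntryEdge e) + N.rootEntries

end Net

/-! ## Operations on μ-representations -/

variable {n : ℕ}

/-- Multiplicity of a simple μ-vector in a μ-representation: the number of
entries (with multiplicity) containing it. -/
def multVec (μs : MuRep n) (m : MuVec n) : ℕ :=
  μs.countP (fun ent => ∃ t, (m, t) ∈ ent)

def hasTagged (μs : MuRep n) (mt : MuVec n × Tag) : Prop := ∃ ent ∈ μs, mt ∈ ent

/-- The entry of a simple μ-vector (meaningful when its multiplicity is 1). -/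
def entryOf (μs : MuRep n) (m : MuVec n) : MuEntry n :=
  if h : ∃ ent ∈ μs, ∃ t, (m, t) ∈ ent then h.choose else 0

/-- The tag of a simple μ-vector (meaningful when its multiplicity is 1). -/
def tagOf (μs : MuRep n) (m : MuVec n) : Tag :=
  if hasTagged μs (m, Tag.rn) then Tag.rn
  else if hasTagged μs (m, Tag.ie) then Tag.ie
  else if hasTagged μs (m, Tag.te) then Tag.te
  else Tag.hy

/-- The tagged μ-vectors other than `m` in the entry of `m`. -/
def invParts (μs : MuRep n) (m : MuVec n) : MuEntry n :=
  (entryOf μs m).filter (fun mt => mt.1 ≠ m)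

def hasInv (μs : MuRep n) (m : MuVec n) : Prop := invParts μs m ≠ 0

/-- The inverse `m⁻¹` of `m` (meaningful when it exists). -/
def invVec (μs : MuRep n) (m : MuVec n) : MuVec n := ((invParts μs m).toList.headI).1

/-- `(a,b)` is a tree cherry of the μ-representation. -/
def MuTreeCherry (μs : MuRep n) (a b : Fin n) : Prop :=
  multVec μs (dlt ({a.succ, b.succ} : Finset (Fin (n + 1)))) = 1

/-- Type of a tree cherry of a μ-representation. -/
def muTreeType (μs : MuRep n) (a b : Fin n) : CT :=
  let mab := dlt ({a.succ, b.succ} : Finset (Fin (n + 1)))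
  match tagOf μs mab with
  | Tag.rn => CT.r2
  | Tag.ie => CT.r3
  | Tag.te =>
      if (¬ hasInv μs mab) ∨ (∃ mt ∈ invParts μs mab, mt.2 = Tag.ie) then CT.d else CT.u
  | Tag.hy => CT.u

/-- `(a,b)` is a reticulate cherry of the μ-representation. -/
def MuRetCherry (μs : MuRep n) (a b : Fin n) : Prop :=
  multVec μs (dlt ({0, a.succ} : Finset (Fin (n + 1)))) = 2 ∧
    (multVec μs (dlt ({0, a.succ, b.succ} : Finset (Fin (n + 1)))) = 1 ∨
      (multVec μs (dlt ({0, a.succ, b.succ} : Finset (Fin (n + 1)))) = 2 ∧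
        ∀ ent ∈ μs, ∀ t : Tag,
          (dlt ({0, a.succ, b.succ} : Finset (Fin (n + 1))), t) ∈ ent → t = Tag.ie))

/-- Type of a reticulate cherry of a μ-representation. -/
def muRetType (μs : MuRep n) (a b : Fin n) : CT :=
  let mab := dlt ({0, a.succ, b.succ} : Finset (Fin (n + 1)))
  if multVec μs mab = 2 then CT.r3
  else
    match tagOf μs mab with
    | Tag.rn => CT.r2
    | Tag.ie => CT.r3
    | Tag.te =>
        if (¬ hasInv μs mab) ∨ (∃ mt ∈ invParts μs mab, mt.2 = Tag.ie) then CT.d else CT.u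
    | Tag.hy => CT.u

/-- `δ_{0,a,b}⁻¹`, defined as `δ_{0,a}` in the multiplicity-2 (parallel) case. -/
def retInv (μs : MuRep n) (a b : Fin n) : MuVec n :=
  if multVec μs (dlt ({0, a.succ, b.succ} : Finset (Fin (n + 1)))) = 2 then
    dlt ({0, a.succ} : Finset (Fin (n + 1)))
  else invVec μs (dlt ({0, a.succ, b.succ} : Finset (Fin (n + 1))))

/-- The internal μ-entry of a reticulate cherry `(a,b)` with respect to `μs`. -/
def internalEntry (μs : MuRep n) (a b : Fin n) : MuEntry n :=
  let d0a := dlt ({0, a.succ} : Finset (Fin (n + 1)))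
  let d0ab := dlt ({0, a.succ, b.succ} : Finset (Fin (n + 1)))
  if multVec μs d0ab = 1 ∧
      ((¬ hasInv μs d0ab) ∨ (∃ mt ∈ invParts μs d0ab, mt.2 = Tag.ie)) then
    ({(d0a, Tag.hy)} : MuEntry n)
  else
    ({(d0a, Tag.hy), (fun i => d0ab i + retInv μs a b i - d0a i, Tag.ie)} : MuEntry n)

/-- Remove the whole entry of `m`. -/
def removeEntryOf (μs : MuRep n) (m : MuVec n) : MuRep n := μs.erase (entryOf μs m)

/-- Remove `m⁻¹` from the entry of `m` (keeping `m`). -/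
def removeInvOf (μs : MuRep n) (m : MuVec n) : MuRep n :=
  (μs.erase (entryOf μs m)) + {(entryOf μs m).filter (fun mt => mt.1 = m)}

/-- Remove `m` from its entry (keeping the rest of the entry). -/
def removeVecOf (μs : MuRep n) (m : MuVec n) : MuRep n :=
  (μs.erase (entryOf μs m)) + {(entryOf μs m).filter (fun mt => mt.1 ≠ m)}

def entryOfT (μs : MuRep n) (mt : MuVec n × Tag) : MuEntry n :=
  if h : ∃ ent ∈ μs, mt ∈ ent then h.choose else 0

/-- Remove one occurrence of the tagged μ-vector `mt` from some entry containing it. -/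
def removeTaggedOnce (μs : MuRep n) (mt : MuVec n × Tag) : MuRep n :=
  (μs.erase (entryOfT μs mt)) + {(entryOfT μs mt).erase mt}

/-- Change the tag of `m⁻¹` (within the entry of `m`) to `ie`. -/
def retagInvIe (μs : MuRep n) (m : MuVec n) : MuRep n :=
  let ent := entryOf μs m
  (μs.erase ent) +
    {ent.filter (fun mt => mt.1 = m) + (invParts μs m).map (fun mt => (mt.1, Tag.ie))}

/-- Change the tag of one occurrence of the tagged μ-vector `mt` to `t'`. -/
def retagTaggedTo (μs : MuRep n) (mt : MuVec n × Tag) (t' : Tag) : MuRep n :=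
  let ent := entryOfT μs mt
  (μs.erase ent) + {(ent.erase mt) + ({(mt.1, t')} : MuEntry n)}

/-- Apply `f` to every simple μ-vector of every entry. -/
def mapVecs (f : MuVec n → MuVec n) (μs : MuRep n) : MuRep n :=
  μs.map (fun ent => ent.map (fun mt => (f mt.1, mt.2)))

/-- `(m_0, m_a, m_b, …) ↦ (m_0, 0, m_b, …)`. -/
def zeroCoordA (a : Fin n) (m : MuVec n) : MuVec n :=
  fun i => if i = a.succ then 0 else m i

/-- `(m_0, m_a, m_b, …) ↦ (m_0 − m_a, m_a − m_b, m_b, …)`. -/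
def retAdj (a b : Fin n) (m : MuVec n) : MuVec n :=
  fun i => if i = 0 then m 0 - m a.succ else if i = a.succ then m a.succ - m b.succ else m i

/-- Reduction of a tree cherry `(a,b)` on a μ-representation. -/
def muReduceTree (μs : MuRep n) (a b : Fin n) : MuRep n :=
  let dab := dlt ({a.succ, b.succ} : Finset (Fin (n + 1)))
  let da := dlt ({a.succ} : Finset (Fin (n + 1)))
  let db := dlt ({b.succ} : Finset (Fin (n + 1)))
  let μ1 :=
    match muTreeType μs a b with
    | CT.r2 => removeEntryOf μs db
    | CT.d => removeEntryOf μs db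
    | CT.r3 => removeVecOf (removeInvOf μs db) dab
    | CT.u => retagInvIe (removeEntryOf μs db) dab
  let μ2 := removeEntryOf μ1 da
  mapVecs (zeroCoordA a) μ2

/-- Reduction of a reticulate cherry `(a,b)` on a μ-representation. -/
def muReduceRet (μs : MuRep n) (a b : Fin n) : MuRep n :=
  let d0a := dlt ({0, a.succ} : Finset (Fin (n + 1)))
  let d0ab := dlt ({0, a.succ, b.succ} : Finset (Fin (n + 1)))
  let da := dlt ({a.succ} : Finset (Fin (n + 1)))
  let db := dlt ({b.succ} : Finset (Fin (n + 1)))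
  let intEnt := internalEntry μs a b
  let μ1 :=
    match muRetType μs a b with
    | CT.r2 => removeEntryOf μs db
    | CT.d => removeEntryOf μs db
    | CT.r3 => removeTaggedOnce (removeInvOf μs db) (d0ab, Tag.ie)
    | CT.u => retagInvIe (removeEntryOf μs db) d0ab
  let μ2 := removeEntryOf μ1 da
  let μ3 := μ2.erase intEnt
  let μ4 := retagTaggedTo μ3 (d0a, Tag.hy) Tag.te
  mapVecs (retAdj a b) μ4

/-- Reduction of a cherry `(a,b)` on a μ-representation. -/
def muReduceCherry (μs : MuRep n) (a b : Fin n) : MuRep n :=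
  if MuTreeCherry μs a b then muReduceTree μs a b
  else if MuRetCherry μs a b then muReduceRet μs a b
  else μs

/-! ## Cherries and reductions on networks -/

namespace Net

/-- The node labelled `a` (meaningful when it exists). -/
def labelNode (N : Net n) (a : Fin n) : ℕ :=
  ((N.V.filter (fun x => N.lbl x = some a)).sort (· ≤ ·)).headI

def inEdges (N : Net n) (x : ℕ) : Finset ℕ :=
  N.E.filter (fun e => N.dir e = true ∧ N.head e = x)

/-- The parent of `x` (meaningful when `x` has in-degree 1). -/
def parentOf (N : Net n) (x : ℕ) : ℕ :=
  N.tail (((N.inEdges x).sort (· ≤ ·)).headI)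

def IsParentOf (N : Net n) (p x : ℕ) : Prop :=
  ∃ e ∈ N.E, N.dir e = true ∧ N.tail e = p ∧ N.head e = x

/-- `(a,b)` is a tree cherry of `N`. -/
def TreeCherry (N : Net n) (a b : Fin n) : Prop :=
  ∃ x y p, N.HasLeaf a x ∧ N.HasLeaf b y ∧ x ≠ y ∧ N.IsParentOf p x ∧ N.IsParentOf p y

/-- `(a,b)` is a reticulate cherry of `N`. -/
def RetCherry (N : Net n) (a b : Fin n) : Prop :=
  ∃ x y pa pb, N.HasLeaf a x ∧ N.HasLeaf b y ∧ x ≠ y ∧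
    N.IsParentOf pa x ∧ N.IsHybrid pa ∧ N.IsParentOf pb y ∧ N.IsParentOf pb pa

def IsCherry (N : Net n) (a b : Fin n) : Prop := N.TreeCherry a b ∨ N.RetCherry a b

/-- The type of a cherry `(a,b)`, read off from the parent of `b`. -/
def cherryType (N : Net n) (a b : Fin n) : CT :=
  let pb := N.parentOf (N.labelNode b)
  if N.IsRootNode pb ∧ N.deg pb = 2 then CT.r2
  else if N.IsRootNode pb ∧ N.deg pb = 3 then CT.r3
  else if 0 < N.undeg pb then CT.u
  else CT.d

def incE (N : Net n) (v : ℕ) : Finset ℕ :=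
  N.E.filter (fun e => N.tail e = v ∨ N.head e = v)

/-- A node is suppressible (Def. of node suppression). -/
def Suppressible (N : Net n) (v : ℕ) : Prop :=
  N.lbl v = none ∧
    ((N.deg v = 2 ∧ ¬ N.IsRootNode v) ∨
      (N.deg v = 1 ∧ N.IsRootNode v ∧ ∀ e ∈ N.incE v, ¬ N.IsHybrid (N.head e)))

/-- Replace the two edges `e1`, `e2` at `v` by the single edge (named `e1`)
from `p` to `c`, directed iff `d`. -/
def replaceEdge (N : Net n) (v e1 e2 p c : ℕ) (d : Bool) : Net n :=
  { V := N.V.erase v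
    E := N.E.erase e2
    tail := Function.update N.tail e1 p
    head := Function.update N.head e1 c
    dir := Function.update N.dir e1 d
    lbl := N.lbl }

/-- Suppress a (suppressible) node of degree 1 or 2. -/
def suppress (N : Net n) (v : ℕ) : Net n :=
  match (N.incE v).sort (· ≤ ·) with
  | [e] => { N with V := N.V.erase v, E := N.E.erase e }
  | [e1, e2] =>
      let o1 := if N.tail e1 = v then N.head e1 else N.tail e1
      let o2 := if N.tail e2 = v then N.head e2 else N.tail e2
      if N.dir e1 = true ∧ N.tail e1 = v then N.replaceEdge v e1 e2 o2 o1 true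
      else if N.dir e2 = true ∧ N.tail e2 = v then N.replaceEdge v e1 e2 o1 o2 true
      else if N.dir e1 = true then N.replaceEdge v e1 e2 o1 o2 true
      else if N.dir e2 = true then N.replaceEdge v e1 e2 o2 o1 true
      else N.replaceEdge v e1 e2 o1 o2 false
  | _ => N

def suppressIf (N : Net n) (v : ℕ) : Net n := if N.Suppressible v then N.suppress v else N

/-- Delete the leaf `x` and its incident edge(s). -/
def deleteLeaf (N : Net n) (x : ℕ) : Net n :=
  { V := N.V.erase x
    E := N.E \ N.incE x
    tail := N.tail
    head := N.head
    dir := N.dir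
    lbl := Function.update N.lbl x none }

/-- Reduction of a tree cherry `(a,b)`. -/
def reduceTree (N : Net n) (a b : Fin n) : Net n :=
  let x := N.labelNode a
  let p := N.parentOf x
  (N.deleteLeaf x).suppressIf p

/-- Reduction of a reticulate cherry `(a,b)`: delete the internal hybrid edge,
suppress `p_b` if suppressible, then suppress `p_a`. -/
def reduceRet (N : Net n) (a b : Fin n) : Net n :=
  let x := N.labelNode a
  let y := N.labelNode b
  let pa := N.parentOf x
  let pb := N.parentOf y
  let eint :=
    ((N.E.filter (fun e => N.dir e = true ∧ N.tail e = pb ∧ N.head e = pa)).sort (· ≤ ·)).headI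
  let N1 : Net n := { N with E := N.E.erase eint }
  ((N1.suppressIf pb).suppress pa)

/-- Reduction of the cherry `(a,b)` in `N`, written `N^{(a,b)}`. -/
def reduceCherry (N : Net n) (a b : Fin n) : Net n :=
  if N.TreeCherry a b then N.reduceTree a b
  else if N.RetCherry a b then N.reduceRet a b
  else N

def reduceSeq (N : Net n) (S : List (Fin n × Fin n)) : Net n :=
  S.foldl (fun M s => M.reduceCherry s.1 s.2) N

def IsRedSeq : Net n → List (Fin n × Fin n) → Prop
  | _, [] => True
  | N, s :: S => N.IsCherry s.1 s.2 ∧ IsRedSeq (N.reduceCherry s.1 s.2) S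

/-- `N` is the trivial forest on `L0`: isolated nodes labelled bijectively by `L0`. -/
def IsTrivialForest (N : Net n) (L0 : Finset (Fin n)) : Prop :=
  N.E = ∅ ∧ (∀ v ∈ N.V, ∃ a ∈ L0, N.lbl v = some a) ∧
    (∀ a ∈ L0, ∃ v ∈ N.V, N.lbl v = some a)

/-- `N` is orchard: some cherry reduction sequence reduces it to a trivial forest. -/
def Orchard (N : Net n) : Prop :=
  ∃ S L0, N.IsRedSeq S ∧ (N.reduceSeq S).IsTrivialForest L0

def freshV (N : Net n) : ℕ := N.V.sup id + 1
def freshE (N : Net n) : ℕ := N.E.sup id + 1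

/-- Addition of the cherry `(a,b)` of kind `k` to `N` (identity if conditions fail). -/
def addCherry (N : Net n) (a b : Fin n) (k : CherryKind) : Net n :=
  let y := N.labelNode b
  let w := N.parentOf y
  let ewb := ((N.inEdges y).sort (· ≤ ·)).headI
  let va := N.freshV
  let vpb := N.freshV + 1
  let e1 := N.freshE
  let e2 := N.freshE + 1
  let x := N.labelNode a
  let pa := N.parentOf x
  let isolated : Prop := y ∈ N.V ∧ N.deg y = 0 ∧ (N.lbl y).isSome
  let nonIsolated : Prop := y ∈ N.V ∧ N.deg y ≠ 0 ∧ (N.lbl y).isSome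
  let resolvedRoot : Prop := N.IsRootNode w ∧ N.deg w = 2
  let aLeaf : Prop := ∃ xx, N.HasLeaf a xx
  match k with
  | CherryKind.Tr2 =>
      if isolated then
        { V := insert vpb (insert va N.V)
          E := insert e2 (insert e1 N.E)
          tail := Function.update (Function.update N.tail e1 vpb) e2 vpb
          head := Function.update (Function.update N.head e1 va) e2 y
          dir := Function.update (Function.update N.dir e1 true) e2 true
          lbl := Function.update N.lbl va (some a) }
      else N
  | CherryKind.Tr3 =>
      if nonIsolated ∧ resolvedRoot then
        { V := insert va N.V
          E := insert e1 N.E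
          tail := Function.update N.tail e1 w
          head := Function.update N.head e1 va
          dir := Function.update N.dir e1 true
          lbl := Function.update N.lbl va (some a) }
      else N
  | CherryKind.Td =>
      if nonIsolated ∧ ¬ resolvedRoot then
        { V := insert vpb (insert va N.V)
          E := insert e2 (insert e1 N.E)
          tail := Function.update (Function.update N.tail e1 vpb) e2 vpb
          head :=
            Function.update (Function.update (Function.update N.head ewb vpb) e1 va) e2 y
          dir := Function.update (Function.update N.dir e1 true) e2 true
          lbl := Function.update N.lbl va (some a) }
      else N
  | CherryKind.Tu =>
      if nonIsolated ∧ ¬ resolvedRoot then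
        { V := insert vpb (insert va N.V)
          E := insert e2 (insert e1 N.E)
          tail := Function.update (Function.update N.tail e1 vpb) e2 vpb
          head :=
            Function.update (Function.update (Function.update N.head ewb vpb) e1 va) e2 y
          dir :=
            Function.update (Function.update (Function.update N.dir ewb false) e1 true) e2 true
          lbl := Function.update N.lbl va (some a) }
      else N
  | CherryKind.Rr2 =>
      if aLeaf ∧ isolated then
        { V := insert vpb N.V
          E := insert e2 (insert e1 N.E)
          tail := Function.update (Function.update N.tail e1 vpb) e2 vpb
          head := Function.update (Function.update N.head e1 pa) e2 y
          dir := Function.update (Function.update N.dir e1 true) e2 true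
          lbl := N.lbl }
      else N
  | CherryKind.Rr3 =>
      if aLeaf ∧ nonIsolated ∧ resolvedRoot then
        { V := N.V
          E := insert e1 N.E
          tail := Function.update N.tail e1 w
          head := Function.update N.head e1 pa
          dir := Function.update N.dir e1 true
          lbl := N.lbl }
      else N
  | CherryKind.Rd =>
      if aLeaf ∧ nonIsolated ∧ ¬ resolvedRoot then
        { V := insert vpb N.V
          E := insert e2 (insert e1 N.E)
          tail := Function.update (Function.update N.tail e1 vpb) e2 vpb
          head :=
            Function.update (Function.update (Function.update N.head ewb vpb) e1 pa) e2 y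
          dir := Function.update (Function.update N.dir e1 true) e2 true
          lbl := N.lbl }
      else N
  | CherryKind.Ru =>
      if aLeaf ∧ nonIsolated ∧ ¬ resolvedRoot then
        { V := insert vpb N.V
          E := insert e2 (insert e1 N.E)
          tail := Function.update (Function.update N.tail e1 vpb) e2 vpb
          head :=
            Function.update (Function.update (Function.update N.head ewb vpb) e1 pa) e2 y
          dir :=
            Function.update (Function.update (Function.update N.dir ewb false) e1 true) e2 true
          lbl := N.lbl }
      else N

/-- Isomorphism of leaf-labelled semidirected networks. -/
def Isom (N M : Net n) : Prop :=
  ∃ f g : ℕ → ℕ,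
    Set.InjOn f ↑N.V ∧ N.V.image f = M.V ∧
    Set.InjOn g ↑N.E ∧ N.E.image g = M.E ∧
    (∀ e ∈ N.E, M.dir (g e) = N.dir e) ∧
    (∀ e ∈ N.E, N.dir e = true →
      M.tail (g e) = f (N.tail e) ∧ M.head (g e) = f (N.head e)) ∧
    (∀ e ∈ N.E, N.dir e = false →
      (M.tail (g e) = f (N.tail e) ∧ M.head (g e) = f (N.head e)) ∨
        (M.tail (g e) = f (N.head e) ∧ M.head (g e) = f (N.tail e))) ∧
    (∀ v ∈ N.V, M.lbl (f v) = N.lbl v)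

/-- `N` is a (complete binary) `L`-network. -/
def Good (N : Net n) : Prop := N.IsLNetwork ∧ N.IsBinary ∧ N.IsComplete

/-- The edge-based μ-dissimilarity: size of the symmetric difference of the
multisets of μ-entries. -/
def dmu (N M : Net n) : ℕ := ((N.muRep - M.muRep) + (M.muRep - N.muRep)).card

/-- `(a,b)` is a reticulate cherry of `N` whose internal and external hybrid
edges are parallel. -/
def ParallelRet (N : Net n) (a b : Fin n) : Prop :=
  ∃ x y pa pb hi he, N.HasLeaf a x ∧ N.HasLeaf b y ∧
    N.IsParentOf pa x ∧ N.IsHybrid pa ∧ N.IsParentOf pb y ∧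
    hi ≠ he ∧ hi ∈ N.E ∧ he ∈ N.E ∧ N.dir hi = true ∧ N.dir he = true ∧
    N.tail hi = pb ∧ N.head hi = pa ∧ N.tail he = pb ∧ N.head he = pa

end Net



/-! ## Auxiliary lemmas -/

namespace Net

variable {n : ℕ} {N : Net n}

lemma chain_append : ∀ {p q : List (ℕ × Bool)} {u v x : ℕ},
    N.chain u p v → N.chain v q x → N.chain u (p ++ q) x
  | [], q, u, v, x, h1, h2 => by
      simp only [Net.chain] at h1; subst h1; simpa using h2
  | s :: p, q, u, v, x, h1, h2 => ⟨h1.1, chain_append h1.2 h2⟩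

lemma chain_edges : ∀ {p : List (ℕ × Bool)} {u x : ℕ}, N.chain u p x →
    ∀ t ∈ p, t.1 ∈ N.E
  | [], _, _, _ => by simp
  | s :: p, u, x, h => by
      intro t ht
      rcases List.mem_cons.1 ht with rfl | ht
      · exact h.1.1
      · exact chain_edges h.2 t ht

lemma chain_last : ∀ {p : List (ℕ × Bool)} {u x : ℕ}, N.chain u p x → p ≠ [] →
    x ∈ p.map N.dst
  | [], _, _, _, h => absurd rfl h
  | s :: p, u, x, h, _ => by
      by_cases hp : p = []
      · subst hp
        have : N.dst s = x := h.2
        simp [this]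
      · exact List.mem_cons_of_mem _ (chain_last h.2 hp)

lemma chain_decomp : ∀ {p : List (ℕ × Bool)} {u x : ℕ} (t : ℕ × Bool), N.chain u p x →
    t ∈ p → ∃ p₁ p₂, p = p₁ ++ t :: p₂ ∧ N.chain u p₁ (N.src t) ∧ N.stepOK (N.src t) t
  | [], _, _, t, _, ht => absurd ht List.not_mem_nil
  | s :: p, u, x, t, h, ht => by
      rcases List.mem_cons.1 ht with rfl | ht
      · refine ⟨[], p, rfl, ?_, ?_⟩
        · exact (h.1.2.2).symm
        · rw [h.1.2.2]; exact h.1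
      · obtain ⟨p₁, p₂, rfl, hc, hOK⟩ := chain_decomp t h.2 ht
        exact ⟨s :: p₁, p₂, rfl, ⟨h.1, hc⟩, hOK⟩

lemma step_pair (t : ℕ × Bool) :
    (N.src t = N.tail t.1 ∧ N.dst t = N.head t.1) ∨
      (N.src t = N.head t.1 ∧ N.dst t = N.tail t.1) := by
  rcases t with ⟨e, b⟩
  cases b
  · right; simp [Net.src, Net.dst]
  · left; simp [Net.src, Net.dst]

lemma endpoint_not_src : ∀ {p : List (ℕ × Bool)} {u w : ℕ}, N.chain u p w →
    (u :: p.map N.dst).Nodup → ∀ t ∈ p, N.src t ≠ w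
  | [], _, _, _, _, t, ht => absurd ht List.not_mem_nil
  | s :: p, u, w, h, hnd, t, ht => by
      rcases List.mem_cons.1 ht with rfl | ht
      · rw [h.1.2.2]
        intro hEq
        subst hEq
        exact (List.nodup_cons.1 hnd).1 (chain_last h (by simp))
      · exact endpoint_not_src h.2 (List.nodup_cons.1 hnd).2 t ht

lemma edges_nodup : ∀ {p : List (ℕ × Bool)} {u x : ℕ}, N.chain u p x →
    (u :: p.map N.dst).Nodup → (p.map Prod.fst).Nodup
  | [], _, _, _, _ => List.nodup_nil
  | s :: p, u, x, h, hnd => by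
      have hnd' : (N.dst s :: p.map N.dst).Nodup := (List.nodup_cons.1 hnd).2
      have ih := edges_nodup h.2 hnd'
      simp only [List.map_cons, List.nodup_cons]
      refine ⟨?_, ih⟩
      intro hmem
      obtain ⟨t, ht, ht1⟩ := List.mem_map.1 hmem
      -- dst t ∈ {u, dst s}
      have hdt : N.dst t = u ∨ N.dst t = N.dst s := by
        have hsrc : N.src s = u := h.1.2.2
        rcases step_pair (N := N) s with ⟨hs1, hs2⟩ | ⟨hs1, hs2⟩ <;>
          rcases step_pair (N := N) t with ⟨ht1', ht2'⟩ | ⟨ht1', ht2'⟩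
        · right; rw [ht2', ht1, ← hs2]
        · left; rw [ht2', ht1, ← hs1, hsrc]
        · left; rw [ht2', ht1, ← hs1, hsrc]
        · right; rw [ht2', ht1, ← hs2]
      have hmemd : N.dst t ∈ p.map N.dst := List.mem_map_of_mem ht
      rcases hdt with hdt | hdt
      · rw [hdt] at hmemd
        exact (List.nodup_cons.1 hnd).1 (List.mem_cons_of_mem _ hmemd)
      · rw [hdt] at hmemd
        exact (List.nodup_cons.1 hnd').1 hmemd

lemma noreturn (hacy : N.Acyclic) : ∀ {p : List (ℕ × Bool)} {u x : ℕ} {s : ℕ × Bool},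
    N.chain u p x → (u :: p.map N.dst).Nodup → N.stepOK x s →
    s.1 ∉ p.map Prod.fst → N.dst s ∉ u :: p.map N.dst
  | [], u, x, s, hch, hnd, hs, hedge => by
      simp only [List.map_nil, List.mem_singleton]
      intro hmem
      have hdu : N.dst s = u := by simpa using hmem
      have hux : u = x := hch
      exact hacy [s] ⟨x, by simp, ⟨hs, show N.dst s = x by rw [hdu, hux]⟩, by simp, by simp⟩
  | t :: p, u, x, s, hch, hnd, hs, hedge => by
      have hnd' : (N.dst t :: p.map N.dst).Nodup := (List.nodup_cons.1 hnd).2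
      have ih := noreturn hacy hch.2 hnd' hs
        (fun hm => hedge (by simp only [List.map_cons, List.mem_cons]; right; exact hm))
      intro hmem
      rcases List.mem_cons.1 hmem with hdu | hrest
      · refine hacy ((t :: p) ++ [s]) ⟨u, by simp, ?_, ?_, ?_⟩
        · exact chain_append hch ⟨hs, hdu⟩
        · rw [List.map_append, List.nodup_append]
          refine ⟨(List.nodup_cons.1 hnd).2, by simp, ?_⟩
          intro z hz b hz2 hzb
          subst hzb
          have hzz : z = N.dst s := by simpa using hz2
          rw [hzz, hdu] at hz
          exact (List.nodup_cons.1 hnd).1 hz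
        · rw [List.map_append, List.nodup_append]
          refine ⟨edges_nodup hch hnd, by simp, ?_⟩
          intro z hz b hz2 hzb
          subst hzb
          have hzz : z = s.1 := by simpa using hz2
          rw [hzz] at hz
          exact hedge hz
      · exact ih hrest

lemma extend_path (hacy : N.Acyclic) {p : List (ℕ × Bool)} {u x : ℕ} {s : ℕ × Bool}
    (hp : N.IsPath u x p) (hs : N.stepOK x s) (hedge : s.1 ∉ p.map Prod.fst) :
    N.IsPath u (N.dst s) (p ++ [s]) := by
  refine ⟨hp.1, chain_append hp.2.1 ⟨hs, rfl⟩, ?_⟩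
  have hfresh := noreturn hacy hp.2.1 hp.2.2 hs hedge
  have : u :: (p ++ [s]).map N.dst = (u :: p.map N.dst) ++ [N.dst s] := by simp
  rw [this, List.nodup_append]
  exact ⟨hp.2.2, by simp, by
    intro z hz
    simp only [List.mem_singleton]
    rintro _ rfl rfl
    exact hfresh hz⟩

end Net


namespace Net

variable {n : ℕ} {N : Net n}

lemma no_selfloop (hacy : N.Acyclic) {e : ℕ} (he : e ∈ N.E) : N.tail e ≠ N.head e := by
  intro h
  exact hacy [(e, true)] ⟨N.tail e, by simp,
    ⟨⟨he, fun _ => rfl, rfl⟩, show N.head e = N.tail e from h.symm⟩, by simp, by simp⟩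

/-- Available first-step edges at `w`. -/
def avail (N : Net n) (w : ℕ) : Finset ℕ :=
  N.E.filter (fun f => (N.dir f = true ∧ N.tail f = w) ∨
    (N.dir f = false ∧ (N.tail f = w ∨ N.head f = w)))

lemma card_avail (w : ℕ) : (N.avail w).card = N.outdeg w + N.undeg w := by
  classical
  rw [avail, Finset.filter_or, Finset.card_union_of_disjoint, outdeg, undeg]
  rw [Finset.disjoint_left]
  intro f hf1 hf2
  have h1 := (Finset.mem_filter.1 hf1).2.1
  have h2 := (Finset.mem_filter.1 hf2).2.1
  simp [h1] at h2

lemma avail_mem_E {w f : ℕ} (hf : f ∈ N.avail w) : f ∈ N.E := (Finset.mem_filter.1 hf).1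

lemma avail_incident {w f : ℕ} (hf : f ∈ N.avail w) : N.tail f = w ∨ N.head f = w := by
  rcases (Finset.mem_filter.1 hf).2 with ⟨_, h⟩ | ⟨_, h⟩
  · exact Or.inl h
  · exact h

lemma step_of_avail {w f : ℕ} (hf : f ∈ N.avail w) :
    ∃ s : ℕ × Bool, N.stepOK w s ∧ s.1 = f := by
  classical
  by_cases ht : N.tail f = w
  · exact ⟨(f, true), ⟨avail_mem_E hf, fun _ => rfl, ht⟩, rfl⟩
  · rcases (Finset.mem_filter.1 hf).2 with ⟨_, h⟩ | ⟨hd, h⟩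
    · exact absurd h ht
    · rcases h with h | h
      · exact absurd h ht
      · refine ⟨(f, false), ⟨avail_mem_E hf, ?_, h⟩, rfl⟩
        intro hdd
        have hdd' : N.dir f = true := hdd
        simp [hd] at hdd'

lemma avail_two (hN : N.Good) {w : ℕ} (hw : w ∈ N.V) (h1 : ¬N.IsLeafNode w)
    (h2 : ¬N.IsHybrid w) : 2 ≤ (N.avail w).card := by
  rw [card_avail]
  obtain ⟨hr, hl, ho⟩ := hN.2.1 w hw
  by_cases hroot : N.IsRootNode w
  · have hdeg := hr hroot
    have hin : N.indeg w = 0 := hroot.2.1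
    have hun : N.undeg w = 0 := hroot.2.2
    rcases hdeg with h | h | h
    · exfalso
      apply h1
      refine ⟨hw, ?_, hun⟩
      have := h
      unfold Net.deg at this
      omega
    all_goals unfold Net.deg at *; omega
  · have hdeg := ho hroot h1
    have hin : N.indeg w ≤ 1 := by
      by_contra hcon
      exact h2 (by unfold Net.IsHybrid; omega)
    unfold Net.deg at hdeg
    omega

lemma endpoint_mem_V (hN : N.IsLNetwork) {p : List (ℕ × Bool)} {u y : ℕ}
    (hp : N.IsPath u y p) : y ∈ N.V := by
  rcases eq_or_ne p [] with rfl | hne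
  · have : u = y := hp.2.1
    exact this ▸ hp.1
  · have hy := chain_last hp.2.1 hne
    obtain ⟨t, ht, hty⟩ := List.mem_map.1 hy
    have hE := chain_edges hp.2.1 t ht
    rcases step_pair (N := N) t with ⟨_, h⟩ | ⟨_, h⟩
    · rw [← hty, h]; exact hN.wfH _ hE
    · rw [← hty, h]; exact hN.wfT _ hE

lemma dst_mem_V (hN : N.IsLNetwork) {t : ℕ × Bool} (ht : t.1 ∈ N.E) : N.dst t ∈ N.V := by
  rcases step_pair (N := N) t with ⟨_, h⟩ | ⟨_, h⟩
  · rw [h]; exact hN.wfH _ ht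
  · rw [h]; exact hN.wfT _ ht

lemma pick_step_avoid (hN : N.Good) {p : List (ℕ × Bool)} {u w : ℕ}
    (hp : N.IsPath u w p) (h1 : ¬N.IsLeafNode w) (h2 : ¬N.IsHybrid w)
    (hw : w ∈ N.V) : ∃ s : ℕ × Bool, N.stepOK w s ∧ s.1 ∉ p.map Prod.fst := by
  obtain ⟨f₁, hf₁, f₂, hf₂, hne⟩ := Finset.one_lt_card.1 (avail_two hN hw h1 h2)
  -- at most one edge of p is incident to w
  have key : ∀ {f : ℕ}, f ∈ N.avail w → f ∈ p.map Prod.fst →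
      ∃ t ∈ p, t.1 = f ∧ N.dst t = w := by
    intro f hf hmem
    obtain ⟨t, ht, ht1⟩ := List.mem_map.1 hmem
    refine ⟨t, ht, ht1, ?_⟩
    have hinc := avail_incident hf
    have hns := endpoint_not_src hp.2.1 hp.2.2 t ht
    rcases step_pair (N := N) t with ⟨hs, hd⟩ | ⟨hs, hd⟩ <;> rw [ht1] at hs hd <;>
      rcases hinc with h | h
    · exact absurd (hs.trans h) hns
    · rw [hd, h]
    · rw [hd, h]
    · exact absurd (hs.trans h) hns
  by_cases hm1 : f₁ ∈ p.map Prod.fst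
  · by_cases hm2 : f₂ ∈ p.map Prod.fst
    · exfalso
      obtain ⟨t₁, ht₁, he₁, hd₁⟩ := key hf₁ hm1
      obtain ⟨t₂, ht₂, he₂, hd₂⟩ := key hf₂ hm2
      have hdup : (p.map N.dst).Nodup := (List.nodup_cons.1 hp.2.2).2
      have : t₁ = t₂ := List.inj_on_of_nodup_map hdup ht₁ ht₂ (by rw [hd₁, hd₂])
      exact hne (by rw [← he₁, ← he₂, this])
    · obtain ⟨s, hs, hs1⟩ := step_of_avail hf₂
      exact ⟨s, hs, by rw [hs1]; exact hm2⟩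
  · obtain ⟨s, hs, hs1⟩ := step_of_avail hf₁
    exact ⟨s, hs, by rw [hs1]; exact hm1⟩

lemma path_length_le (hN : N.IsLNetwork) {p : List (ℕ × Bool)} {u y : ℕ}
    (hp : N.IsPath u y p) : p.length + 1 ≤ N.V.card := by
  classical
  set l : List ℕ := u :: p.map N.dst with hl
  have hnd : l.Nodup := hp.2.2
  have hsub : ∀ z ∈ l, z ∈ N.V := by
    intro z hz
    rcases List.mem_cons.1 hz with rfl | hz
    · exact hp.1
    · obtain ⟨t, ht, rfl⟩ := List.mem_map.1 hz
      exact dst_mem_V hN (chain_edges hp.2.1 t ht)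
  have h1 : l.toFinset.card = l.length := List.toFinset_card_of_nodup hnd
  have h2 : l.toFinset ⊆ N.V := fun z hz => hsub z (List.mem_toFinset.1 hz)
  have := Finset.card_le_card h2
  rw [h1] at this
  simpa [hl] using this

lemma complete_aux (hN : N.Good) : ∀ (k : ℕ) {p : List (ℕ × Bool)} {u w : ℕ},
    N.V.card ≤ p.length + 1 + k → N.IsPath u w p →
    ∃ q y, N.IsPath u y (p ++ q) ∧ (N.IsLeafNode y ∨ N.IsHybrid y) := by
  intro k
  induction k with
  | zero =>
    intro p u w hk hp
    by_cases hly : N.IsLeafNode w ∨ N.IsHybrid w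
    · exact ⟨[], w, by simpa using hp, hly⟩
    · push_neg at hly
      exfalso
      have hw := endpoint_mem_V hN.1 hp
      obtain ⟨s, hs, hsm⟩ := pick_step_avoid hN hp hly.1 hly.2 hw
      have hp' := extend_path hN.1.acyclic hp hs hsm
      have := path_length_le hN.1 hp'
      simp only [List.length_append, List.length_cons, List.length_nil] at this
      omega
  | succ k ih =>
    intro p u w hk hp
    by_cases hly : N.IsLeafNode w ∨ N.IsHybrid w
    · exact ⟨[], w, by simpa using hp, hly⟩
    · push_neg at hly
      have hw := endpoint_mem_V hN.1 hp
      obtain ⟨s, hs, hsm⟩ := pick_step_avoid hN hp hly.1 hly.2 hw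
      have hp' := extend_path hN.1.acyclic hp hs hsm
      obtain ⟨q, y, hq, hy⟩ := ih (p := p ++ [s]) (by simp; omega) hp'
      exact ⟨s :: q, y, by simpa using hq, hy⟩

lemma complete (hN : N.Good) {p : List (ℕ × Bool)} {u w : ℕ} (hp : N.IsPath u w p) :
    ∃ q y, N.IsPath u y (p ++ q) ∧ (N.IsLeafNode y ∨ N.IsHybrid y) :=
  complete_aux hN N.V.card (Nat.le_add_left _ _) hp

end Net


lemma finite_bounded_lists {α : Type} (T : Set α) (hT : T.Finite) :
    ∀ k : ℕ, {l : List α | l.length ≤ k ∧ ∀ x ∈ l, x ∈ T}.Finite := by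
  intro k
  induction k with
  | zero =>
    refine Set.Finite.subset (Set.finite_singleton []) ?_
    rintro l ⟨h1, _⟩
    simp [List.length_eq_zero_iff.1 (Nat.le_zero.1 h1)]
  | succ k ih =>
    refine Set.Finite.subset (Set.Finite.insert []
      (Set.Finite.image (fun q : α × List α => q.1 :: q.2) (hT.prod ih))) ?_
    rintro l ⟨h1, h2⟩
    cases l with
    | nil => exact Set.mem_insert _ _
    | cons a l' =>
      refine Set.mem_insert_of_mem _ ⟨(a, l'), ⟨h2 a List.mem_cons_self,
        ⟨?_, fun x hx => h2 x (List.mem_cons_of_mem _ hx)⟩⟩, rfl⟩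
      simpa using Nat.succ_le_succ_iff.1 h1

namespace Net

variable {n : ℕ} {N : Net n}

lemma paths_finite (hN : N.IsLNetwork) (u y : ℕ) : (N.paths u y).Finite := by
  refine Set.Finite.subset (finite_bounded_lists {s : ℕ × Bool | s.1 ∈ N.E}
    (Set.Finite.subset ((N.E.finite_toSet).prod (Set.finite_univ (α := Bool)))
      (fun s hs => ⟨hs, trivial⟩)) N.V.card) ?_
  intro p hp
  refine ⟨?_, fun t ht => chain_edges hp.2.1 t ht⟩
  have := path_length_le hN hp
  omega

lemma pathsAvoid_subset (u y e : ℕ) : N.pathsAvoid u y e ⊆ N.paths u y := fun _ h => h.1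

lemma pathsAvoid_finite (hN : N.IsLNetwork) (u y e : ℕ) : (N.pathsAvoid u y e).Finite :=
  (paths_finite hN u y).subset (pathsAvoid_subset u y e)

lemma one_le_mAvoid (hN : N.IsLNetwork) {u y e : ℕ} {p : List (ℕ × Bool)}
    (hp : p ∈ N.pathsAvoid u y e) : 1 ≤ N.mAvoid u y e := by
  have : 0 < (N.pathsAvoid u y e).ncard :=
    (Set.ncard_pos (pathsAvoid_finite hN u y e)).2 ⟨p, hp⟩
  exact this

lemma two_le_mAvoid (hN : N.IsLNetwork) {u y e : ℕ} {p q : List (ℕ × Bool)}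
    (hp : p ∈ N.pathsAvoid u y e) (hq : q ∈ N.pathsAvoid u y e) (hne : p ≠ q) :
    2 ≤ N.mAvoid u y e := by
  have : 1 < (N.pathsAvoid u y e).ncard :=
    (Set.one_lt_ncard_iff (pathsAvoid_finite hN u y e)).2 ⟨p, q, hp, hq, hne⟩
  exact this

lemma mAvoid_le_m (hN : N.IsLNetwork) (u y e : ℕ) : N.mAvoid u y e ≤ N.m u y :=
  Set.ncard_le_ncard (pathsAvoid_subset u y e) (paths_finite hN u y)

/-- δ-vector coordinates. -/
lemma dlt_zero (a : Fin n) : dlt ({a.succ} : Finset (Fin (n + 1))) 0 = 0 := by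
  simp [dlt, Fin.succ_ne_zero, (Fin.succ_ne_zero a).symm]

lemma dlt_succ (a b : Fin n) :
    dlt ({a.succ} : Finset (Fin (n + 1))) b.succ = if b = a then 1 else 0 := by
  simp only [dlt, Finset.mem_singleton]
  by_cases h : b = a
  · simp [h]
  · simp [h, fun hc => h (Fin.succ_injective _ hc)]

lemma muAt_zero (e v : ℕ) : N.muAt e v 0 = ∑ h ∈ N.Hybs, N.mAvoid v h e := rfl

lemma muAt_succ (e v : ℕ) (b : Fin n) : N.muAt e v b.succ = N.mToLblAvoid v b e := by
  simp [muAt]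

lemma muFrom_zero (v : ℕ) : N.muFrom v 0 = ∑ h ∈ N.Hybs, N.m v h := rfl

lemma muFrom_succ (v : ℕ) (b : Fin n) : N.muFrom v b.succ = N.mToLbl v b := by
  simp [muFrom]

/-- The leaf labelled `a` is the unique node with that label. -/
lemma filter_lbl_eq (hN : N.IsLNetwork) {a : Fin n} {x : ℕ} (hx : N.HasLeaf a x) :
    N.V.filter (fun z => N.lbl z = some a) = {x} := by
  ext z
  simp only [Finset.mem_filter, Finset.mem_singleton]
  constructor
  · rintro ⟨hz, hlz⟩
    exact hN.lblInj z hz x hx.1 (by rw [hlz]; simp) (hlz.trans hx.2.symm)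
  · rintro rfl
    exact ⟨hx.1, hx.2⟩

lemma leaf_node_of_hasLeaf (hN : N.IsLNetwork) {a : Fin n} {x : ℕ} (hx : N.HasLeaf a x) :
    N.IsLeafNode x := ((hN.lblLeaf x hx.1).1 (by rw [hx.2]; simp))

lemma no_step_from_leaf (hl : N.IsLeafNode x) (s : ℕ × Bool) : ¬N.stepOK x s := by
  rintro ⟨hE, hdir, hsrc⟩
  rcases hb : s.2 with _ | _
  · -- backward step: dir must be false, head = x
    have hd : N.dir s.1 = false := by
      rcases hd : N.dir s.1 with _ | _
      · rfl
      · rw [hdir hd] at hb; cases hb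
    have hhead : N.head s.1 = x := by rw [← hsrc]; simp [Net.src, hb]
    have : s.1 ∈ N.E.filter (fun e => N.dir e = false ∧ (N.tail e = x ∨ N.head e = x)) :=
      Finset.mem_filter.2 ⟨hE, hd, Or.inr hhead⟩
    have hcard := hl.2.2
    rw [Net.undeg, Finset.card_eq_zero] at hcard
    rw [hcard] at this
    exact absurd this (Finset.notMem_empty _)
  · have htail : N.tail s.1 = x := by rw [← hsrc]; simp [Net.src, hb]
    rcases hd : N.dir s.1 with _ | _
    · have : s.1 ∈ N.E.filter (fun e => N.dir e = false ∧ (N.tail e = x ∨ N.head e = x)) :=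
        Finset.mem_filter.2 ⟨hE, hd, Or.inl htail⟩
      have hcard := hl.2.2
      rw [Net.undeg, Finset.card_eq_zero] at hcard
      rw [hcard] at this
      exact absurd this (Finset.notMem_empty _)
    · have : s.1 ∈ N.E.filter (fun e => N.dir e = true ∧ N.tail e = x) :=
        Finset.mem_filter.2 ⟨hE, hd, htail⟩
      have hcard := hl.2.1
      rw [Net.outdeg, Finset.card_eq_zero] at hcard
      rw [hcard] at this
      exact absurd this (Finset.notMem_empty _)

lemma paths_leaf_self (hl : N.IsLeafNode x) : N.paths x x = {[]} := by
  ext p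
  simp only [Set.mem_singleton_iff]
  constructor
  · intro hp
    cases p with
    | nil => rfl
    | cons s p => exact absurd hp.2.1.1 (no_step_from_leaf hl s)
  · rintro rfl
    exact ⟨hl.1, rfl, by simp⟩

lemma paths_leaf_ne (hl : N.IsLeafNode x) (hxy : x ≠ y) : N.paths x y = ∅ := by
  ext p
  simp only [Set.mem_empty_iff_false, iff_false]
  intro hp
  cases p with
  | nil => exact hxy hp.2.1
  | cons s p => exact absurd hp.2.1.1 (no_step_from_leaf hl s)

lemma pathsAvoid_leaf_self (hl : N.IsLeafNode x) (e : ℕ) : N.pathsAvoid x x e = {[]} := by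
  ext p
  simp only [Set.mem_singleton_iff]
  constructor
  · intro hp
    cases p with
    | nil => rfl
    | cons s p => exact absurd hp.1.2.1.1 (no_step_from_leaf hl s)
  · rintro rfl
    exact ⟨⟨hl.1, rfl, by simp⟩, by simp⟩

lemma mAvoid_leaf_self (hl : N.IsLeafNode x) (e : ℕ) : N.mAvoid x x e = 1 := by
  rw [Net.mAvoid, pathsAvoid_leaf_self hl]
  exact Set.ncard_singleton _

lemma m_leaf_self (hl : N.IsLeafNode x) : N.m x x = 1 := by
  rw [Net.m, paths_leaf_self hl]
  exact Set.ncard_singleton _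

lemma mAvoid_leaf_ne (hl : N.IsLeafNode x) (hxy : x ≠ y) (e : ℕ) : N.mAvoid x y e = 0 := by
  rw [Net.mAvoid]
  have : N.pathsAvoid x y e = ∅ := by
    rw [← Set.subset_empty_iff, ← paths_leaf_ne hl hxy]
    exact pathsAvoid_subset x y e
  rw [this]
  simp

lemma m_leaf_ne (hl : N.IsLeafNode x) (hxy : x ≠ y) : N.m x y = 0 := by
  rw [Net.m, paths_leaf_ne hl hxy]
  simp

lemma leaf_not_hybrid (hN : N.IsLNetwork) (hl : N.IsLeafNode x) : ¬N.IsHybrid x := by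
  have := hN.leavesTree x hl
  rw [Net.IsTreeNode] at this
  rw [Net.IsHybrid]
  omega

/-- The μ-vector of the leaf labelled `a`, avoiding any edge. -/
lemma muAt_leaf (hN : N.IsLNetwork) {a : Fin n} {x : ℕ} (hx : N.HasLeaf a x) (e : ℕ) :
    N.muAt e x = dlt ({a.succ} : Finset (Fin (n + 1))) := by
  have hl := leaf_node_of_hasLeaf hN hx
  funext i
  induction i using Fin.cases with
  | zero =>
    rw [muAt_zero, dlt_zero]
    refine Finset.sum_eq_zero fun h hh => ?_
    have hhx : h ≠ x := by
      rintro rfl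
      exact leaf_not_hybrid hN hl (Finset.mem_filter.1 hh).2
    exact mAvoid_leaf_ne hl (Ne.symm hhx) e
  | succ b =>
    rw [muAt_succ, dlt_succ, Net.mToLblAvoid]
    by_cases hba : b = a
    · subst hba
      rw [filter_lbl_eq hN hx, if_pos rfl, Finset.sum_singleton, mAvoid_leaf_self hl]
    · rw [if_neg hba]
      refine Finset.sum_eq_zero fun z hz => ?_
      have hzx : z ≠ x := by
        rintro rfl
        exact hba (by
          have := (Finset.mem_filter.1 hz).2
          rw [hx.2] at this
          exact Option.some_injective _ this.symm ▸ rfl)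
      exact mAvoid_leaf_ne hl (Ne.symm hzx) e

lemma muFrom_leaf (hN : N.IsLNetwork) {a : Fin n} {x : ℕ} (hx : N.HasLeaf a x) :
    N.muFrom x = dlt ({a.succ} : Finset (Fin (n + 1))) := by
  have hl := leaf_node_of_hasLeaf hN hx
  funext i
  induction i using Fin.cases with
  | zero =>
    rw [muFrom_zero, dlt_zero]
    refine Finset.sum_eq_zero fun h hh => ?_
    have hhx : h ≠ x := by
      rintro rfl
      exact leaf_not_hybrid hN hl (Finset.mem_filter.1 hh).2
    exact m_leaf_ne hl (Ne.symm hhx)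
  | succ b =>
    rw [muFrom_succ, dlt_succ, Net.mToLbl]
    by_cases hba : b = a
    · subst hba
      rw [filter_lbl_eq hN hx, if_pos rfl, Finset.sum_singleton, m_leaf_self hl]
    · rw [if_neg hba]
      refine Finset.sum_eq_zero fun z hz => ?_
      have hzx : z ≠ x := by
        rintro rfl
        exact hba (by
          have := (Finset.mem_filter.1 hz).2
          rw [hx.2] at this
          exact Option.some_injective _ this.symm ▸ rfl)
      exact m_leaf_ne hl (Ne.symm hzx)

end Net


namespace Net

variable {n : ℕ} {N : Net n}

lemma mAvoid_le_sum_hyb {v y e : ℕ} (hy : y ∈ N.V) (hh : N.IsHybrid y) :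
    N.mAvoid v y e ≤ ∑ h ∈ N.Hybs, N.mAvoid v h e :=
  Finset.single_le_sum (f := fun h => N.mAvoid v h e) (fun _ _ => Nat.zero_le _)
    (by simp only [Net.Hybs, Finset.mem_filter]; exact ⟨hy, hh⟩)

lemma mAvoid_le_mToLblAvoid {v y e : ℕ} {b : Fin n} (hy : y ∈ N.V)
    (hb : N.lbl y = some b) : N.mAvoid v y e ≤ N.mToLblAvoid v b e := by
  rw [Net.mToLblAvoid]
  exact Finset.single_le_sum (f := fun z => N.mAvoid v z e) (fun _ _ => Nat.zero_le _)
    (Finset.mem_filter.2 ⟨hy, hb⟩)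

/-- Core counting lemma: if `v ≠ x` then the avoiding μ-vector at `v` is not `δ_a`,
provided `e` can only ever be used as a first step of a path from `v`. -/
lemma core (hN : N.Good) {a : Fin n} {x : ℕ} (hx : N.HasLeaf a x) {v : ℕ} (hv : v ∈ N.V)
    (hvx : v ≠ x) {e : ℕ}
    (hE : ∀ (q : List (ℕ × Bool)) (y : ℕ) (t : ℕ × Bool), N.IsPath v y q → t ∈ q →
      t.1 = e → ∃ q', q = t :: q')
    (hcard : ¬N.IsLeafNode v → ¬N.IsHybrid v → 2 ≤ ((N.avail v).erase e).card) :
    N.muAt e v ≠ dlt ({a.succ} : Finset (Fin (n + 1))) := by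
  intro heq
  have hLN := hN.1
  have hnil : [] ∈ N.pathsAvoid v v e := ⟨⟨hv, rfl, by simp⟩, by simp⟩
  have hhyb : ¬N.IsHybrid v := by
    intro hh
    have h1 : 1 ≤ ∑ h ∈ N.Hybs, N.mAvoid v h e :=
      le_trans (one_le_mAvoid hLN hnil) (mAvoid_le_sum_hyb hv hh)
    have h2 := congrFun heq 0
    rw [muAt_zero, dlt_zero] at h2
    omega
  have hleaf : ¬N.IsLeafNode v := by
    intro hl
    obtain ⟨b, hb⟩ : ∃ b, N.lbl v = some b :=
      Option.isSome_iff_exists.1 ((hLN.lblLeaf v hv).2 hl)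
    have h1 : 1 ≤ N.mToLblAvoid v b e :=
      le_trans (one_le_mAvoid hLN hnil) (mAvoid_le_mToLblAvoid hv hb)
    have h2 := congrFun heq b.succ
    rw [muAt_succ, dlt_succ] at h2
    by_cases hba : b = a
    · exact hvx (hLN.lblInj v hv x hx.1 (by rw [hb]; simp) (by rw [hb, hba, hx.2]))
    · rw [if_neg hba] at h2; omega
  obtain ⟨f₁, hf₁, f₂, hf₂, hne⟩ := Finset.one_lt_card.1 (hcard hleaf hhyb)
  have build : ∀ f ∈ (N.avail v).erase e, ∃ (s : ℕ × Bool) (q : List (ℕ × Bool)) (y : ℕ),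
      s.1 = f ∧ (s :: q) ∈ N.pathsAvoid v y e ∧ (N.IsLeafNode y ∨ N.IsHybrid y) := by
    intro f hf
    have hfe : f ≠ e := (Finset.mem_erase.1 hf).1
    have hfa : f ∈ N.avail v := (Finset.mem_erase.1 hf).2
    obtain ⟨s, hsOK, hs1⟩ := step_of_avail hfa
    have hdv : N.dst s ≠ v := by
      have hloop := no_selfloop hLN.acyclic hsOK.1
      have hsrc := hsOK.2.2
      rcases step_pair (N := N) s with ⟨h1, h2⟩ | ⟨h1, h2⟩
      · rw [h2]; intro hc; exact hloop (by rw [← h1, hsrc, hc])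
      · rw [h2]; intro hc; exact hloop (by rw [hc, ← h1, hsrc])
    have hbase : N.IsPath v (N.dst s) [s] := ⟨hv, ⟨hsOK, rfl⟩, by simp [Ne.symm hdv]⟩
    obtain ⟨q, y, hq, hy⟩ := complete hN hbase
    refine ⟨s, q, y, hs1, ⟨by simpa using hq, ?_⟩, hy⟩
    intro hmem
    obtain ⟨t, ht, ht1⟩ := List.mem_map.1 hmem
    obtain ⟨q', hq'⟩ := hE _ y t (by simpa using hq) ht ht1
    have hts : t = s := by injection hq' with h1 h2; exact h1.symm
    rw [hts, hs1] at ht1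
    exact hfe ht1
  have classify : ∀ (p : List (ℕ × Bool)) (y : ℕ), p ∈ N.pathsAvoid v y e →
      (N.IsLeafNode y ∨ N.IsHybrid y) → y = x := by
    intro p y hp hy
    have hyV : y ∈ N.V := endpoint_mem_V hLN hp.1
    rcases hy with hy | hy
    · obtain ⟨b, hb⟩ : ∃ b, N.lbl y = some b :=
        Option.isSome_iff_exists.1 ((hLN.lblLeaf y hyV).2 hy)
      have h1 : 1 ≤ N.mToLblAvoid v b e :=
        le_trans (one_le_mAvoid hLN hp) (mAvoid_le_mToLblAvoid hyV hb)
      have h2 := congrFun heq b.succ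
      rw [muAt_succ, dlt_succ] at h2
      by_cases hba : b = a
      · exact hLN.lblInj y hyV x hx.1 (by rw [hb]; simp) (by rw [hb, hba, hx.2])
      · rw [if_neg hba] at h2; omega
    · exfalso
      have h1 : 1 ≤ ∑ h ∈ N.Hybs, N.mAvoid v h e :=
        le_trans (one_le_mAvoid hLN hp) (mAvoid_le_sum_hyb hyV hy)
      have h2 := congrFun heq 0
      rw [muAt_zero, dlt_zero] at h2
      omega
  obtain ⟨s₁, q₁, y₁, hs₁, hp₁, hy₁⟩ := build f₁ hf₁
  obtain ⟨s₂, q₂, y₂, hs₂, hp₂, hy₂⟩ := build f₂ hf₂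
  have hy₁x := classify _ _ hp₁ hy₁
  have hy₂x := classify _ _ hp₂ hy₂
  rw [hy₁x] at hp₁
  rw [hy₂x] at hp₂
  have hpne : (s₁ :: q₁) ≠ (s₂ :: q₂) := by
    intro hc
    injection hc with h1 _
    exact hne (by rw [← hs₁, ← hs₂, h1])
  have h2 : 2 ≤ N.mAvoid v x e := two_le_mAvoid hLN hp₁ hp₂ hpne
  have h3 : N.mToLblAvoid v a e = N.mAvoid v x e := by
    rw [Net.mToLblAvoid, filter_lbl_eq hLN hx, Finset.sum_singleton]
  have h4 := congrFun heq a.succ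
  rw [muAt_succ, dlt_succ, if_pos rfl, h3] at h4
  omega

end Net


namespace Net

variable {n : ℕ} {N : Net n}

lemma freshE_not_mem : N.freshE ∉ N.E := by
  intro h
  have := Finset.le_sup (f := id) h
  simp only [id] at this
  unfold Net.freshE at this
  omega

lemma avail_subset_E (w : ℕ) : N.avail w ⊆ N.E := fun f hf => avail_mem_E hf

lemma mAvoid_not_mem_E (he : e ∉ N.E) (v y : ℕ) : N.mAvoid v y e = N.m v y := by
  rw [Net.mAvoid, Net.m]
  congr 1
  ext p
  simp only [Net.pathsAvoid, Net.paths, Set.mem_setOf_eq, and_iff_left_iff_imp]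
  intro hp hmem
  obtain ⟨t, ht, ht1⟩ := List.mem_map.1 hmem
  exact he (ht1 ▸ chain_edges hp.2.1 t ht)

lemma muAt_not_mem_E (he : e ∉ N.E) (v : ℕ) : N.muAt e v = N.muFrom v := by
  funext i
  induction i using Fin.cases with
  | zero =>
    rw [muAt_zero, muFrom_zero]
    exact Finset.sum_congr rfl fun h _ => mAvoid_not_mem_E he v h
  | succ b =>
    rw [muAt_succ, muFrom_succ, Net.mToLblAvoid, Net.mToLbl]
    exact Finset.sum_congr rfl fun z _ => mAvoid_not_mem_E he v z

/-- **(A)** A root-type μ-vector equal to `δ_a` forces the node to be the leaf `x`. -/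
lemma muFrom_eq_delta (hN : N.Good) {a : Fin n} {x : ℕ} (hx : N.HasLeaf a x) {v : ℕ}
    (hv : v ∈ N.V) (h : N.muFrom v = dlt ({a.succ} : Finset (Fin (n + 1)))) : v = x := by
  by_contra hvx
  refine core hN hx hv hvx (e := N.freshE) ?_ ?_ ?_
  · intro q y t hq ht ht1
    exact absurd (ht1 ▸ chain_edges hq.2.1 t ht) freshE_not_mem
  · intro hleaf hhyb
    rw [Finset.erase_eq_of_notMem (fun hc => freshE_not_mem (avail_mem_E hc))]
    exact avail_two hN hv hleaf hhyb
  · rw [muAt_not_mem_E freshE_not_mem]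
    exact h

/-- **(B)** An edge-type μ-vector equal to `δ_a` forces its node to be the leaf `x`. -/
lemma muAt_eq_delta (hN : N.Good) {a : Fin n} {x : ℕ} (hx : N.HasLeaf a x) {e v : ℕ}
    (he : e ∈ N.E) (hinc : v = N.tail e ∨ v = N.head e)
    (hdirc : N.dir e = true → v = N.head e)
    (h : N.muAt e v = dlt ({a.succ} : Finset (Fin (n + 1)))) : v = x := by
  have hv : v ∈ N.V := by
    rcases hinc with hv1 | hv1
    · rw [hv1]; exact hN.1.wfT e he
    · rw [hv1]; exact hN.1.wfH e he
  by_contra hvx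
  refine core hN hx hv hvx (e := e) ?_ ?_ h
  · intro q y t hq ht ht1
    obtain ⟨p₁, p₂, hqe, hc1, hOK⟩ := chain_decomp t hq.2.1 ht
    have hvsd : v = N.src t ∨ v = N.dst t := by
      rcases step_pair (N := N) t with ⟨h1, h2⟩ | ⟨h1, h2⟩ <;> rw [ht1] at h1 h2 <;>
        rcases hinc with hv1 | hv1
      · exact Or.inl (hv1.trans h1.symm)
      · exact Or.inr (hv1.trans h2.symm)
      · exact Or.inr (hv1.trans h2.symm)
      · exact Or.inl (hv1.trans h1.symm)
    have hnodupv : v ∉ q.map N.dst := (List.nodup_cons.1 hq.2.2).1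
    rcases hvsd with hvs | hvd
    · rcases eq_or_ne p₁ [] with rfl | hne
      · exact ⟨p₂, by simpa using hqe⟩
      · exfalso
        have hmem : N.src t ∈ p₁.map N.dst := chain_last hc1 hne
        rw [← hvs] at hmem
        apply hnodupv
        rw [hqe, List.map_append]
        exact List.mem_append_left _ hmem
    · exfalso
      exact hnodupv (hvd ▸ List.mem_map_of_mem ht)
  · intro hleaf hhyb
    rcases hd : N.dir e with _ | _
    · -- undirected: three available edges
      have hmem : e ∈ N.avail v := Finset.mem_filter.2 ⟨he, Or.inr ⟨hd, by
        rcases hinc with hv1 | hv1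
        · exact Or.inl hv1.symm
        · exact Or.inr hv1.symm⟩⟩
      have hnontriv : ¬N.TrivialClass v := by
        intro htriv
        rcases hinc with hv1 | hv1
        · have hstep : N.ustep v (N.head e) := ⟨e, he, hd, Or.inl ⟨hv1.symm, rfl⟩⟩
          have := htriv _ (Relation.ReflTransGen.single hstep)
          exact no_selfloop hN.1.acyclic he (by rw [← hv1, ← this])
        · have hstep : N.ustep v (N.tail e) := ⟨e, he, hd, Or.inr ⟨rfl, hv1.symm⟩⟩
          have := htriv _ (Relation.ReflTransGen.single hstep)
          exact no_selfloop hN.1.acyclic he (by rw [← hv1, this])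
      have hin : N.indeg v = 0 := by
        rw [Net.indeg, Finset.card_eq_zero, Finset.filter_eq_empty_iff]
        rintro g hg ⟨hgd, hgh⟩
        exact hN.2.2.2 v hv hnontriv g hg hgd (hgh ▸ Relation.ReflTransGen.refl)
      have hroot : ¬N.IsRootNode v := by
        rintro ⟨-, -, hund⟩
        have : e ∈ N.E.filter (fun f => N.dir f = false ∧ (N.tail f = v ∨ N.head f = v)) :=
          Finset.mem_filter.2 ⟨he, hd, by
            rcases hinc with hv1 | hv1
            · exact Or.inl hv1.symm
            · exact Or.inr hv1.symm⟩
        rw [Net.undeg, Finset.card_eq_zero] at hund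
        rw [hund] at this
        exact absurd this (Finset.notMem_empty _)
      have hdeg : N.deg v = 3 := (hN.2.1 v hv).2.2 hroot hleaf
      have h3 : (N.avail v).card = 3 := by
        rw [card_avail]
        unfold Net.deg at hdeg
        omega
      rw [Finset.card_erase_of_mem hmem, h3]
    · -- directed: e not available at v = head e
      have hvh : v = N.head e := hdirc hd
      have hmem : e ∉ N.avail v := by
        intro hc
        rcases (Finset.mem_filter.1 hc).2 with ⟨-, htl⟩ | ⟨hdf, -⟩
        · exact no_selfloop hN.1.acyclic he (htl.trans hvh)
        · rw [hd] at hdf; cases hdf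
      rw [Finset.erase_eq_of_notMem hmem]
      exact avail_two hN hv hleaf hhyb

end Net


namespace Net

variable {n : ℕ} {N : Net n}

/-- **(C)** A difference μ-vector (paths through `e`) equal to `δ_a` forces
`head e` to be the leaf `x`. -/
lemma diff_eq_delta (hN : N.Good) {a : Fin n} {x : ℕ} (hx : N.HasLeaf a x) {e : ℕ}
    (he : e ∈ N.E) (hdir : N.dir e = true)
    (h : (fun i => N.muFrom (N.tail e) i - N.muAt e (N.tail e) i) =
      dlt ({a.succ} : Finset (Fin (n + 1)))) : N.head e = x := by
  classical
  have hLN := hN.1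
  set u := N.tail e with hu'
  set w := N.head e with hw'
  have hu : u ∈ N.V := hLN.wfT e he
  have hw : w ∈ N.V := hLN.wfH e he
  have huw : u ≠ w := no_selfloop hLN.acyclic he
  -- the number of paths from u to y through e
  set U : ℕ → ℕ := fun y => ({p | p ∈ N.paths u y ∧ e ∈ p.map Prod.fst}).ncard with hU'
  have hUfin : ∀ y, ({p | p ∈ N.paths u y ∧ e ∈ p.map Prod.fst}).Finite :=
    fun y => (paths_finite hLN u y).subset (fun p hp => hp.1)
  have hsplit : ∀ y, N.m u y = N.mAvoid u y e + U y := by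
    intro y
    rw [Net.m, Net.mAvoid, hU']
    rw [← Set.ncard_union_eq (by
        rw [Set.disjoint_left]
        rintro p ⟨_, hp2⟩ ⟨_, hp2'⟩
        exact hp2 hp2') (pathsAvoid_finite hLN u y e) (hUfin y)]
    congr 1
    ext p
    simp only [Net.pathsAvoid, Net.paths, Set.mem_union, Set.mem_setOf_eq]
    by_cases hm : e ∈ p.map Prod.fst <;> by_cases hp : N.IsPath u y p <;> tauto
  have hD0 : N.muFrom u 0 - N.muAt e u 0 = ∑ h ∈ N.Hybs, U h := by
    rw [muFrom_zero, muAt_zero]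
    have : ∑ h ∈ N.Hybs, N.m u h = ∑ h ∈ N.Hybs, N.mAvoid u h e + ∑ h ∈ N.Hybs, U h := by
      rw [← Finset.sum_add_distrib]
      exact Finset.sum_congr rfl fun y _ => hsplit y
    omega
  have hDb : ∀ b : Fin n, N.muFrom u b.succ - N.muAt e u b.succ =
      ∑ z ∈ N.V.filter (fun z => N.lbl z = some b), U z := by
    intro b
    rw [muFrom_succ, muAt_succ, Net.mToLbl, Net.mToLblAvoid]
    have : ∑ z ∈ N.V.filter (fun z => N.lbl z = some b), N.m u z =
        ∑ z ∈ N.V.filter (fun z => N.lbl z = some b), N.mAvoid u z e +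
          ∑ z ∈ N.V.filter (fun z => N.lbl z = some b), U z := by
      rw [← Finset.sum_add_distrib]
      exact Finset.sum_congr rfl fun y _ => hsplit y
    omega
  have hUpos : ∀ y (p : List (ℕ × Bool)), p ∈ N.paths u y → e ∈ p.map Prod.fst →
      1 ≤ U y := by
    intro y p hp hm
    have : 0 < ({p | p ∈ N.paths u y ∧ e ∈ p.map Prod.fst}).ncard :=
      (Set.ncard_pos (hUfin y)).2 ⟨p, hp, hm⟩
    exact this
  -- classification of targets with positive U
  have classify : ∀ y (p : List (ℕ × Bool)), p ∈ N.paths u y → e ∈ p.map Prod.fst →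
      (N.IsLeafNode y ∨ N.IsHybrid y) → y = x := by
    intro y p hp hm hy
    have hyV : y ∈ N.V := endpoint_mem_V hLN hp
    rcases hy with hy | hy
    · obtain ⟨b, hb⟩ : ∃ b, N.lbl y = some b :=
        Option.isSome_iff_exists.1 ((hLN.lblLeaf y hyV).2 hy)
      have h1 : 1 ≤ ∑ z ∈ N.V.filter (fun z => N.lbl z = some b), U z :=
        le_trans (hUpos y p hp hm)
          (Finset.single_le_sum (f := fun z => U z) (fun _ _ => Nat.zero_le _)
            (Finset.mem_filter.2 ⟨hyV, hb⟩))
      have h2 := congrFun h b.succ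
      rw [hDb b, dlt_succ] at h2
      by_cases hba : b = a
      · exact hLN.lblInj y hyV x hx.1 (by rw [hb]; simp) (by rw [hb, hba, hx.2])
      · rw [if_neg hba] at h2; omega
    · exfalso
      have h1 : 1 ≤ ∑ h ∈ N.Hybs, U h :=
        le_trans (hUpos y p hp hm)
          (Finset.single_le_sum (f := fun z => U z) (fun _ _ => Nat.zero_le _)
            (by simp only [Net.Hybs, Finset.mem_filter]; exact ⟨hyV, hy⟩))
      have h2 := congrFun h 0
      rw [hD0, dlt_zero] at h2
      omega
  -- the single-edge path through e
  have hOK : N.stepOK u (e, true) := ⟨he, fun _ => rfl, rfl⟩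
  have hp0 : N.IsPath u w [(e, true)] := by
    refine ⟨hu, ⟨hOK, rfl⟩, ?_⟩
    have : N.dst (e, true) = w := rfl
    simp [this, huw]
  by_contra hwx
  by_cases hly : N.IsLeafNode w ∨ N.IsHybrid w
  · exact hwx (classify w [(e, true)] hp0 (by simp) hly)
  push_neg at hly
  -- two extensions
  obtain ⟨f₁, hf₁, f₂, hf₂, hne⟩ := Finset.one_lt_card.1 (avail_two hN hw hly.1 hly.2)
  have hEav : e ∉ N.avail w := by
    intro hc
    rcases (Finset.mem_filter.1 hc).2 with ⟨-, htl⟩ | ⟨hdf, -⟩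
    · exact huw (hu'.symm.trans htl)
    · rw [hdir] at hdf; cases hdf
  have build : ∀ f ∈ N.avail w, ∃ (s : ℕ × Bool) (q : List (ℕ × Bool)) (y : ℕ),
      s.1 = f ∧ ((e, true) :: s :: q) ∈ N.paths u y ∧ (N.IsLeafNode y ∨ N.IsHybrid y) := by
    intro f hf
    obtain ⟨s, hsOK, hs1⟩ := step_of_avail hf
    have hse : s.1 ∉ [(e, true)].map Prod.fst := by
      simp only [List.map_cons, List.map_nil, List.mem_singleton]
      rw [hs1]
      intro hc
      exact hEav (hc ▸ hf)
    have hp1 := extend_path hLN.acyclic hp0 hsOK hse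
    obtain ⟨q, y, hq, hy⟩ := complete hN hp1
    refine ⟨s, q, y, hs1, ?_, hy⟩
    have hshape : ([(e, true)] ++ [s]) ++ q = (e, true) :: s :: q := by simp
    rw [hshape] at hq
    exact hq
  obtain ⟨s₁, q₁, y₁, hs₁, hp₁, hy₁⟩ := build f₁ hf₁
  obtain ⟨s₂, q₂, y₂, hs₂, hp₂, hy₂⟩ := build f₂ hf₂
  have hm₁ : e ∈ ((e, true) :: s₁ :: q₁).map Prod.fst := by simp
  have hm₂ : e ∈ ((e, true) :: s₂ :: q₂).map Prod.fst := by simp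
  have hy₁x := classify _ _ hp₁ hm₁ hy₁
  have hy₂x := classify _ _ hp₂ hm₂ hy₂
  rw [hy₁x] at hp₁
  rw [hy₂x] at hp₂
  have hpne : ((e, true) :: s₁ :: q₁) ≠ ((e, true) :: s₂ :: q₂) := by
    intro hc
    injection hc with _ hc2
    injection hc2 with hc3 _
    exact hne (by rw [← hs₁, ← hs₂, hc3])
  have h2 : 2 ≤ U x := by
    have : 1 < ({p | p ∈ N.paths u x ∧ e ∈ p.map Prod.fst}).ncard :=
      (Set.one_lt_ncard_iff (hUfin x)).2 ⟨_, _, ⟨hp₁, hm₁⟩, ⟨hp₂, hm₂⟩, hpne⟩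
    exact this
  have h3 := congrFun h a.succ
  rw [hDb a, dlt_succ, if_pos rfl, filter_lbl_eq hLN hx, Finset.sum_singleton] at h3
  omega

end Net


lemma countP_val_eq_one {s : Finset ℕ} {P : ℕ → Prop} [DecidablePred P] {e0 : ℕ}
    (he : e0 ∈ s) (hiff : ∀ e ∈ s, (P e ↔ e = e0)) : Multiset.countP P s.val = 1 := by
  classical
  rw [Multiset.countP_eq_card_filter,
    Multiset.filter_congr (fun e hx => by
      constructor
      · intro h; exact (hiff e (by exact hx)).1 h
      · intro h; exact (hiff e (by exact hx)).2 h),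
    Multiset.filter_eq', Multiset.card_replicate,
    Multiset.count_eq_one_of_mem s.nodup he]

namespace Net

variable {n : ℕ} {N : Net n}

lemma mem_muEntryEdge {e : ℕ} {mt : MuVec n × Tag} :
    mt ∈ N.muEntryEdge e ↔
      (N.dir e = true ∧
        mt = (N.muAt e (N.head e), if N.IsHybrid (N.head e) then Tag.hy else Tag.te)) ∨
      (N.dir e = true ∧ N.UnresolvedRC (N.tail e) ∧
        mt = (fun i => N.muFrom (N.tail e) i - N.muAt e (N.tail e) i, Tag.ie)) ∨
      (N.dir e = false ∧
        (mt = (N.muAt e (N.head e), Tag.te) ∨ mt = (N.muAt e (N.tail e), Tag.te))) := by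
  classical
  unfold Net.muEntryEdge
  rcases hd : N.dir e with _ | _
  · simp only [hd, if_false, Bool.false_eq_true, Multiset.insert_eq_cons,
      Multiset.mem_cons, Multiset.mem_singleton, false_and, false_or, true_and]
  · by_cases hun : N.UnresolvedRC (N.tail e) <;>
      simp only [hd, if_true, hun, if_false, Multiset.insert_eq_cons, Multiset.mem_cons,
        Multiset.mem_singleton, true_and, and_true, Bool.true_eq_false, false_and, or_false,
        and_false, false_or, iff_self_or, not_true, iff_or_self] <;> tauto

lemma indeg_zero_of_not_head (h0 : N.indeg x = 0) {e : ℕ} (he : e ∈ N.E)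
    (hd : N.dir e = true) : N.head e ≠ x := by
  intro hc
  rw [Net.indeg, Finset.card_eq_zero] at h0
  have : e ∈ N.E.filter (fun e => N.dir e = true ∧ N.head e = x) :=
    Finset.mem_filter.2 ⟨he, hd, hc⟩
  rw [h0] at this
  exact absurd this (Finset.notMem_empty _)

lemma undeg_zero_of_not_inc (h0 : N.undeg x = 0) {e : ℕ} (he : e ∈ N.E)
    (hd : N.dir e = false) : N.tail e ≠ x ∧ N.head e ≠ x := by
  rw [Net.undeg, Finset.card_eq_zero] at h0
  constructor <;> intro hc <;>
  · have : e ∈ N.E.filter (fun e => N.dir e = false ∧ (N.tail e = x ∨ N.head e = x)) :=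
      Finset.mem_filter.2 ⟨he, hd, by tauto⟩
    rw [h0] at this
    exact absurd this (Finset.notMem_empty _)

lemma ustep_symm : Symmetric N.ustep := by
  rintro u v ⟨e, he, hd, h⟩
  exact ⟨e, he, hd, by tauto⟩

end Net

/-- Lemma 4: `δ_a` has multiplicity exactly 1 among the simple
μ-vectors of `μ(N)` iff `a` is a leaf of `N`. -/
theorem stmt6 {n : ℕ} (N : Net n) (hN : N.Good) (a : Fin n) :
    multVec N.muRep (dlt ({a.succ} : Finset (Fin (n + 1)))) = 1 ↔
      ∃ x, N.HasLeaf a x := by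
  classical
  have hLN := hN.1
  have hδa : dlt ({a.succ} : Finset (Fin (n + 1))) a.succ = 1 := by
    rw [Net.dlt_succ]; simp
  constructor
  · -- if no leaf is labelled a, the multiplicity is 0
    intro h1
    by_contra hno
    have hfilt : N.V.filter (fun z => N.lbl z = some a) = ∅ := by
      rw [Finset.filter_eq_empty_iff]
      intro z hz hc
      exact hno ⟨z, hz, hc⟩
    have hmA : ∀ e v, N.muAt e v a.succ = 0 := fun e v => by
      rw [Net.muAt_succ, Net.mToLblAvoid, hfilt, Finset.sum_empty]
    have hmF : ∀ v, N.muFrom v a.succ = 0 := fun v => by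
      rw [Net.muFrom_succ, Net.mToLbl, hfilt, Finset.sum_empty]
    have hzero : multVec N.muRep (dlt ({a.succ} : Finset (Fin (n + 1)))) = 0 := by
      rw [multVec, Multiset.countP_eq_zero]
      rintro ent hent ⟨t, ht⟩
      rw [Net.muRep, Multiset.mem_add] at hent
      rcases hent with hent | hent
      · obtain ⟨e, heE, rfl⟩ := Multiset.mem_map.1 hent
        rcases Net.mem_muEntryEdge.1 ht with ⟨_, hp⟩ | ⟨_, _, hp⟩ | ⟨_, hp | hp⟩
        · rw [Prod.mk.injEq] at hp
          have h2 := congrFun hp.1 a.succ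
          rw [hδa, hmA] at h2
          exact one_ne_zero h2
        · rw [Prod.mk.injEq] at hp
          have h2 := congrFun hp.1 a.succ
          rw [hδa, hmF, Nat.zero_sub] at h2
          exact one_ne_zero h2
        · rw [Prod.mk.injEq] at hp
          have h2 := congrFun hp.1 a.succ
          rw [hδa, hmA] at h2
          exact one_ne_zero h2
        · rw [Prod.mk.injEq] at hp
          have h2 := congrFun hp.1 a.succ
          rw [hδa, hmA] at h2
          exact one_ne_zero h2
      · obtain ⟨v, hvm, rfl⟩ := Multiset.mem_map.1 hent
        rw [Multiset.mem_singleton, Prod.mk.injEq] at ht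
        have h2 := congrFun ht.1 a.succ
        rw [hδa, hmF] at h2
        exact one_ne_zero h2
    omega
  · rintro ⟨x, hx⟩
    have hxV := hx.1
    have hleaf := Net.leaf_node_of_hasLeaf hLN hx
    have hio : N.indeg x = 0 ∨ N.indeg x = 1 := by
      have hd01 := (hN.2.1 x hxV).2.1 hleaf
      have ho := hleaf.2.1
      have hu := hleaf.2.2
      unfold Net.deg at hd01
      omega
    rw [multVec, Net.muRep, Multiset.countP_add]
    rcases hio with h0 | h1
    · -- x is isolated: the root entry of x is the unique entry containing δ
      have hroot : N.IsRootNode x := ⟨hxV, h0, hleaf.2.2⟩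
      have htriv : N.TrivialClass x := by
        intro w hw
        rcases (Relation.ReflTransGen.cases_head hw) with rfl | ⟨c, hc, -⟩
        · rfl
        · exfalso
          obtain ⟨e, he, hd, hor⟩ := hc
          rcases Net.undeg_zero_of_not_inc hleaf.2.2 he hd with ⟨ht', hh'⟩
          rcases hor with ⟨h1', -⟩ | ⟨-, h2'⟩
          · exact ht' h1'
          · exact hh' h2'
      have hrc : N.IsRootClass x := by
        refine ⟨hxV, fun e he hd hconn => ?_⟩
        have hxh : N.head e = x :=
          (htriv _ (by haveI : Std.Symm N.ustep := ⟨fun _ _ h => Net.ustep_symm h⟩; exact (Relation.ReflTransGen.stdSymm (r := N.ustep)).symm _ _ hconn)).symm ▸ rfl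
        exact Net.indeg_zero_of_not_head h0 he hd hxh
      -- edge part is zero
      have hedge : Multiset.countP (fun ent => ∃ t, (dlt ({a.succ} : Finset (Fin (n + 1))), t) ∈ ent)
          (N.E.val.map fun e => N.muEntryEdge e) = 0 := by
        rw [Multiset.countP_eq_zero]
        rintro ent hent ⟨t, ht⟩
        obtain ⟨e, heE, rfl⟩ := Multiset.mem_map.1 hent
        have heE' : e ∈ N.E := heE
        rcases Net.mem_muEntryEdge.1 ht with ⟨hd, hp⟩ | ⟨hd, -, hp⟩ | ⟨hd, hp | hp⟩
        · rw [Prod.mk.injEq] at hp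
          have := Net.muAt_eq_delta hN hx heE' (Or.inr rfl) (fun _ => rfl) hp.1.symm
          exact Net.indeg_zero_of_not_head h0 heE' hd this
        · rw [Prod.mk.injEq] at hp
          have := Net.diff_eq_delta hN hx heE' hd hp.1.symm
          exact Net.indeg_zero_of_not_head h0 heE' hd this
        · rw [Prod.mk.injEq] at hp
          have := Net.muAt_eq_delta hN hx heE' (Or.inr rfl)
            (fun hc => absurd hc (by rw [hd]; simp)) hp.1.symm
          exact (Net.undeg_zero_of_not_inc hleaf.2.2 heE' hd).2 this
        · rw [Prod.mk.injEq] at hp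
          have := Net.muAt_eq_delta hN hx heE' (Or.inl rfl)
            (fun hc => absurd hc (by rw [hd]; simp)) hp.1.symm
          exact (Net.undeg_zero_of_not_inc hleaf.2.2 heE' hd).1 this
      -- root part is one
      have hrt : Multiset.countP (fun ent => ∃ t, (dlt ({a.succ} : Finset (Fin (n + 1))), t) ∈ ent)
          N.rootEntries = 1 := by
        rw [Net.rootEntries, Multiset.countP_map]
        rw [← Multiset.countP_eq_card_filter]
        refine countP_val_eq_one (e0 := x) (s := N.V.filter
          (fun v => N.IsRootClass v ∧ ∀ w ∈ N.V, N.UndirConn v w → v ≤ w)) ?_ ?_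
        · exact Finset.mem_filter.2 ⟨hxV, hrc, fun w hw hconn => le_of_eq ((htriv w hconn).symm)⟩
        · intro v hv
          constructor
          · rintro ⟨t, ht⟩
            rw [Multiset.mem_singleton, Prod.mk.injEq] at ht
            exact Net.muFrom_eq_delta hN hx (Finset.mem_filter.1 hv).1 ht.1.symm
          · rintro rfl
            exact ⟨Tag.rn, by rw [Multiset.mem_singleton, Prod.mk.injEq,
              Net.muFrom_leaf hLN hx]; exact ⟨rfl, rfl⟩⟩
      rw [hedge, hrt]
    · -- x has a unique incoming edge e0
      obtain ⟨e0, he0⟩ := Finset.card_eq_one.1 h1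
      have he0m : e0 ∈ N.E.filter (fun e => N.dir e = true ∧ N.head e = x) := by
        rw [he0]; exact Finset.mem_singleton_self _
      obtain ⟨he0E, hd0, hh0⟩ := Finset.mem_filter.1 he0m
      obtain ⟨hd0', hh0'⟩ : N.dir e0 = true ∧ N.head e0 = x := ⟨hd0, hh0⟩
      -- root part is zero
      have hrt : Multiset.countP (fun ent => ∃ t, (dlt ({a.succ} : Finset (Fin (n + 1))), t) ∈ ent)
          N.rootEntries = 0 := by
        rw [Multiset.countP_eq_zero]
        rintro ent hent ⟨t, ht⟩
        obtain ⟨v, hvm, rfl⟩ := Multiset.mem_map.1 hent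
        rw [Multiset.mem_singleton, Prod.mk.injEq] at ht
        have hvV : v ∈ N.V := (Finset.mem_filter.1 hvm).1
        have hvx := Net.muFrom_eq_delta hN hx hvV ht.1.symm
        have hrc : N.IsRootClass v := ((Finset.mem_filter.1 hvm).2).1
        rw [hvx] at hrc
        exact hrc.2 e0 he0E hd0' (hh0' ▸ Relation.ReflTransGen.refl)
      -- edge part is one
      have hedge : Multiset.countP (fun ent => ∃ t, (dlt ({a.succ} : Finset (Fin (n + 1))), t) ∈ ent)
          (N.E.val.map fun e => N.muEntryEdge e) = 1 := by
        rw [Multiset.countP_map, ← Multiset.countP_eq_card_filter]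
        refine countP_val_eq_one (s := N.E) he0E ?_
        intro e heE
        constructor
        · rintro ⟨t, ht⟩
          have hex : N.head e = x := by
            rcases Net.mem_muEntryEdge.1 ht with ⟨hd, hp⟩ | ⟨hd, -, hp⟩ | ⟨hd, hp | hp⟩
            · rw [Prod.mk.injEq] at hp
              exact Net.muAt_eq_delta hN hx heE (Or.inr rfl) (fun _ => rfl) hp.1.symm
            · rw [Prod.mk.injEq] at hp
              exact Net.diff_eq_delta hN hx heE hd hp.1.symm
            · exfalso
              rw [Prod.mk.injEq] at hp
              have := Net.muAt_eq_delta hN hx heE (Or.inr rfl)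
                (fun hc => absurd hc (by rw [hd]; simp)) hp.1.symm
              exact (Net.undeg_zero_of_not_inc hleaf.2.2 heE hd).2 this
            · exfalso
              rw [Prod.mk.injEq] at hp
              have := Net.muAt_eq_delta hN hx heE (Or.inl rfl)
                (fun hc => absurd hc (by rw [hd]; simp)) hp.1.symm
              exact (Net.undeg_zero_of_not_inc hleaf.2.2 heE hd).1 this
          have hdire : N.dir e = true := by
            rcases hde : N.dir e with _ | _
            · exfalso
              exact (Net.undeg_zero_of_not_inc hleaf.2.2 heE hde).2 hex
            · rfl
          have : e ∈ N.E.filter (fun e => N.dir e = true ∧ N.head e = x) :=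
            Finset.mem_filter.2 ⟨heE, hdire, hex⟩
          rw [he0] at this
          exact Finset.mem_singleton.1 this
        · rintro rfl
          refine ⟨if N.IsHybrid (N.head e) then Tag.hy else Tag.te, ?_⟩
          rw [Net.mem_muEntryEdge]
          left
          refine ⟨hd0', ?_⟩
          rw [Prod.mk.injEq]
          refine ⟨?_, rfl⟩
          rw [hh0', Net.muAt_leaf hLN hx]
      rw [hedge, hrt]

end
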